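/- Let (R_n)_{n≥0} be a cyclic urn process with m types started with one ball of type 0, and let k, ℓ ∈ {0,…,m−1} satisfy ω^k + ω^ℓ ∉ {0, −1, −2}, ω^{k+ℓ} ≠ −1, and ω^{k+ℓ} ≠ ω^k + ω^ℓ. Then for every n ≥ 0, E[u_k(R_n)·u_ℓ(R_n)] = (1/(ω^{k+ℓ} − ω^k − ω^ℓ)) · ( Γ(n+1+ω^{k+ℓ})/(Γ(n+1)·Γ(ω^{k+ℓ})) − Γ(n+1+ω^k+ω^ℓ)/(Γ(n+1)·Γ(ω^k+ω^ℓ)) ). -/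

import Mathlib

open MeasureTheory ProbabilityTheory Filter Complex Finset Topology

noncomputable section

/-- `ω = exp(2πi/m)`, the `m`-th elementary root of unity. -/
def cw (m : ℕ) : ℂ := Complex.exp (2 * Real.pi * Complex.I / m)

/-- `λ_k = cos(2πk/m)`. -/
def lam (m k : ℕ) : ℝ := Real.cos (2 * Real.pi * k / m)

/-- `μ_k = sin(2πk/m)`. -/
def muim (m k : ℕ) : ℝ := Real.sin (2 * Real.pi * k / m)

/-- the eigenvector `v_k = (1/m)(1, ω^{-k}, …, ω^{-(m-1)k})`. -/
def vvec (m k : ℕ) : Fin m → ℂ :=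
  fun t => (m : ℂ)⁻¹ * cw m ^ (-((k * (t : ℕ) : ℕ) : ℤ))

/-- the dual coefficient `u_k(w) = ∑_t ω^{kt} w_t`. -/
def ucoef (m k : ℕ) (w : Fin m → ℝ) : ℂ :=
  ∑ t : Fin m, cw m ^ (k * (t : ℕ)) * (w t : ℂ)

/-- the replacement matrix `A` of the cyclic urn. -/
def repA (m : ℕ) : Matrix (Fin m) (Fin m) ℝ :=
  Matrix.of fun i j => if (j : ℕ) = ((i : ℕ) + 1) % m then 1 else 0

/-- the filtration `𝓕_n = σ(R_0, …, R_n)`. -/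
def urnFilt {Ω : Type*} [MeasurableSpace Ω] (m : ℕ) (R : ℕ → Ω → Fin m → ℝ) (n : ℕ) :
    MeasurableSpace Ω :=
  ⨆ i ∈ Finset.range (n + 1), MeasurableSpace.comap (R i) inferInstance

/-- A cyclic urn process with `m` types started with one ball of type `j0`. -/
structure IsCyclicUrn {Ω : Type*} [MeasurableSpace Ω] (μ : Measure Ω) (m : ℕ) (j0 : Fin m)
    (R : ℕ → Ω → Fin m → ℝ) : Prop where
  isProb : IsProbabilityMeasure μ
  meas : ∀ n, Measurable (R n)
  natVal : ∀ n ω i, ∃ z : ℕ, R n ω i = z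
  init : ∀ ω, R 0 ω = fun i => if i = j0 then 1 else 0
  step : ∀ n, ∀ j : Fin m,
    μ[Set.indicator {ω | R (n + 1) ω =
        fun i => R n ω i + if (i : ℕ) = ((j : ℕ) + 1) % m then 1 else 0}
      (fun _ => (1 : ℝ)) | urnFilt m R n]
      =ᵐ[μ] fun ω => R n ω j / (n + 1)

/-- componentwise expectation `E[X]` of a random vector. -/
def expVec {Ω : Type*} [MeasurableSpace Ω] (μ : Measure Ω) {m : ℕ}
    (X : Ω → Fin m → ℝ) : Fin m → ℝ := fun i => ∫ ω, X ω i ∂μ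

/-- the martingale `M_{k,n} = (Γ(n+1)/Γ(n+1+ω^k)) u_k(R_n - E[R_n])`, with `M_{k,0} = 0`. -/
def Mart {Ω : Type*} [MeasurableSpace Ω] (μ : Measure Ω) (m k : ℕ)
    (R : ℕ → Ω → Fin m → ℝ) (n : ℕ) (ω : Ω) : ℂ :=
  if n = 0 then 0
  else (Complex.Gamma ((n : ℂ) + 1) / Complex.Gamma ((n : ℂ) + 1 + cw m ^ k)) *
    ucoef m k (fun t => R n ω t - expVec μ (R n) t)

/-- `ν` is the centered Gaussian distribution `𝒩(0, S)` on `ℝ^d` (Cramér–Wold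
characterization: every linear functional is one-dimensional centered Gaussian). -/
def IsCenteredGaussian {d : ℕ} (ν : Measure (Fin d → ℝ)) (S : Matrix (Fin d) (Fin d) ℝ) : Prop :=
  IsProbabilityMeasure ν ∧
  ∀ l : Fin d → ℝ,
    ν.map (fun x => ∑ i, l i * x i) =
      gaussianReal 0 (Real.toNNReal (∑ i, ∑ j, l i * S i j * l j))

/-- convergence in distribution of the random vectors `X_n` to the law `ν`. -/
def TendstoInDist {Ω : Type*} [MeasurableSpace Ω] (μ : Measure Ω) {d : ℕ}
    (X : ℕ → Ω → Fin d → ℝ) (ν : Measure (Fin d → ℝ)) : Prop :=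
  ∀ f : BoundedContinuousFunction (Fin d → ℝ) ℝ,
    Tendsto (fun n => ∫ ω, f (X n ω) ∂μ) atTop (𝓝 (∫ x, f x ∂ν))


def stv (m : ℕ) (j : Fin m) : Fin m → ℝ := fun i => if (i : ℕ) = ((j : ℕ) + 1) % m then 1 else 0


lemma stv_inj (m : ℕ) (hm : 2 ≤ m) {j j' : Fin m} (h : stv m j = stv m j') : j = j' := by
  have hc : ((j : ℕ) + 1) % m < m := Nat.mod_lt _ (by omega)
  have h1 := congrFun h ⟨_, hc⟩
  simp only [stv] at h1
  by_cases hcc : ((j : ℕ) + 1) % m = ((j' : ℕ) + 1) % m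
  · have h3 : (j:ℕ) % m = (j':ℕ) % m := Nat.ModEq.add_right_cancel' 1 hcc
    rw [Nat.mod_eq_of_lt j.isLt, Nat.mod_eq_of_lt j'.isLt] at h3
    exact Fin.ext h3
  · simp [hcc] at h1


lemma sum_stv (m : ℕ) (hm : 2 ≤ m) (j : Fin m) : ∑ i, stv m j i = 1 := by
  have hc : ((j : ℕ) + 1) % m < m := Nat.mod_lt _ (by omega)
  have h : ∀ i : Fin m, stv m j i = if i = (⟨_, hc⟩ : Fin m) then (1:ℝ) else 0 := by
    intro i; simp [stv, Fin.ext_iff]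
  rw [Finset.sum_congr rfl fun i _ => h i]
  simp

open Classical in
def Sfin (m n : ℕ) : Finset (Fin m → ℝ) :=
  (Finset.univ.image (fun g : Fin m → Fin (n+2) => fun i => ((g i : ℕ) : ℝ))).filter
    (fun v => ∑ i, v i = (n : ℝ) + 1)

lemma sum_of_mem_Sfin {m n : ℕ} {v : Fin m → ℝ} (h : v ∈ Sfin m n) :
    ∑ i, v i = (n : ℝ) + 1 := by
  classical
  rw [Sfin, Finset.mem_filter] at h
  exact h.2

lemma mem_Sfin_of {m n : ℕ} {v : Fin m → ℝ} (hnat : ∀ i, ∃ z : ℕ, v i = z)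
    (hsum : ∑ i, v i = (n : ℝ) + 1) : v ∈ Sfin m n := by
  classical
  choose z hz using hnat
  have hzsum : ∑ i, z i = n + 1 := by
    have h1 : ((∑ i, z i : ℕ) : ℝ) = (n : ℝ) + 1 := by
      push_cast
      rw [Finset.sum_congr rfl fun i _ => (hz i).symm, hsum]
    exact_mod_cast h1
  have hle : ∀ i, z i < n + 2 := by
    intro i
    have := Finset.single_le_sum (f := z) (fun i _ => Nat.zero_le _) (Finset.mem_univ i)
    omega
  rw [Sfin, Finset.mem_filter]
  refine ⟨Finset.mem_image.mpr ⟨fun i => ⟨z i, hle i⟩, Finset.mem_univ _, ?_⟩, hsum⟩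
  funext i
  exact (hz i).symm


lemma cw_pow_m (m : ℕ) (hm : 2 ≤ m) : cw m ^ m = 1 := by
  have hm0 : (m:ℂ) ≠ 0 := Nat.cast_ne_zero.mpr (by omega)
  have h : (m:ℂ) * (2 * ↑Real.pi * Complex.I / m) = 2 * Real.pi * Complex.I := by
    field_simp
  rw [cw, ← Complex.exp_nat_mul, h, Complex.exp_two_pi_mul_I]

lemma cw_abs (m : ℕ) (hm : 2 ≤ m) (a : ℕ) : ‖cw m ^ a‖ = 1 := by
  rw [norm_pow]
  have h : cw m = Complex.exp (((2 * Real.pi / m : ℝ) : ℂ) * Complex.I) := by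
    rw [cw]; congr 1; push_cast; ring
  rw [h, Complex.norm_exp_ofReal_mul_I, one_pow]

lemma ucoef_add_stv (m : ℕ) (hm : 2 ≤ m) (a : ℕ) (v : Fin m → ℝ) (j : Fin m) :
    ucoef m a (v + stv m j) = ucoef m a v + cw m ^ a * cw m ^ (a * (j : ℕ)) := by
  have hc : ((j : ℕ) + 1) % m < m := Nat.mod_lt _ (by omega)
  have key : ∑ t : Fin m, cw m ^ (a * (t : ℕ)) * ((stv m j t : ℝ) : ℂ)
      = cw m ^ a * cw m ^ (a * (j : ℕ)) := by
    have h1 : ∀ t : Fin m, cw m ^ (a * (t : ℕ)) * ((stv m j t : ℝ) : ℂ)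
        = if t = (⟨_, hc⟩ : Fin m) then cw m ^ (a * (t : ℕ)) else 0 := by
      intro t
      by_cases ht : t = (⟨_, hc⟩ : Fin m)
      · rw [if_pos ht]; subst ht; simp [stv]
      · rw [if_neg ht]
        have hne : ¬ ((t : ℕ) = ((j : ℕ) + 1) % m) := fun hh => ht (Fin.ext hh)
        simp [stv, hne]
    rw [Finset.sum_congr rfl fun t _ => h1 t, Finset.sum_ite_eq' Finset.univ _ _]
    rw [if_pos (Finset.mem_univ _)]
    have hmul : (cw m ^ a) ^ (((j:ℕ)+1) % m) = (cw m ^ a) ^ ((j:ℕ)+1) := by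
      refine (pow_eq_pow_mod _ ?_).symm
      rw [← pow_mul, mul_comm, pow_mul, cw_pow_m m hm, one_pow]
    calc cw m ^ (a * (((j:ℕ)+1) % m)) = (cw m ^ a) ^ (((j:ℕ)+1) % m) := by rw [pow_mul]
      _ = (cw m ^ a) ^ ((j:ℕ)+1) := hmul
      _ = cw m ^ a * cw m ^ (a * (j:ℕ)) := by rw [pow_succ, ← pow_mul]; ring
  calc ucoef m a (v + stv m j)
      = ∑ t : Fin m, (cw m ^ (a * (t:ℕ)) * (v t : ℂ)
          + cw m ^ (a * (t:ℕ)) * ((stv m j t : ℝ):ℂ)) := by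
        refine Finset.sum_congr rfl fun t _ => ?_
        show cw m ^ (a * (t:ℕ)) * ((v t + stv m j t : ℝ) : ℂ) = _
        push_cast; ring
    _ = ucoef m a v + cw m ^ a * cw m ^ (a * (j:ℕ)) := by
        rw [Finset.sum_add_distrib, key]; rfl

def Aset {Ω : Type*} (m : ℕ) (R : ℕ → Ω → Fin m → ℝ) (n : ℕ) (j : Fin m) : Set Ω :=
  {ω | R (n+1) ω = fun i => R n ω i + stv m j i}

section UrnLemmas

variable {Ω : Type*} [MeasurableSpace Ω] {μ : Measure Ω} {m : ℕ} {R : ℕ → Ω → Fin m → ℝ}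
  {j0 : Fin m}

lemma step' (hR : IsCyclicUrn μ m j0 R) (n : ℕ) (j : Fin m) :
    μ[Set.indicator (Aset m R n j) (fun _ => (1 : ℝ)) | urnFilt m R n]
      =ᵐ[μ] fun ω => R n ω j / (n + 1) := hR.step n j

lemma mem_Aset_iff {n : ℕ} {j : Fin m} {ω : Ω} :
    ω ∈ Aset m R n j ↔ R (n+1) ω = fun i => R n ω i + stv m j i := Iff.rfl

lemma measurableSet_Aset (hR : IsCyclicUrn μ m j0 R) (n : ℕ) (j : Fin m) :
    MeasurableSet (Aset m R n j) := by
  have hmeas : Measurable fun ω => R (n+1) ω - R n ω :=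
    measurable_pi_iff.mpr fun i =>
      ((measurable_pi_apply i).comp (hR.meas (n+1))).sub
        ((measurable_pi_apply i).comp (hR.meas n))
  have hEq : Aset m R n j = (fun ω => R (n+1) ω - R n ω) ⁻¹' {stv m j} := by
    ext ω
    simp only [Aset, Set.mem_setOf_eq, Set.mem_preimage, Set.mem_singleton_iff]
    constructor
    · intro h; funext i
      have := congrFun h i
      simp only [Pi.sub_apply, this]; ring
    · intro h; funext i
      have := congrFun h i
      simp only [Pi.sub_apply] at this
      simp only [stv] at this ⊢
      linarith
  rw [hEq]
  exact hmeas (measurableSet_singleton _)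

lemma urnFilt_le (hR : IsCyclicUrn μ m j0 R) (n : ℕ) :
    urnFilt m R n ≤ ‹MeasurableSpace Ω› :=
  iSup_le fun i => iSup_le fun _ => (hR.meas i).comap_le

lemma measurable_filt (hR : IsCyclicUrn μ m j0 R) (n : ℕ) :
    Measurable[urnFilt m R n] (R n) :=
  Measurable.of_comap_le (le_iSup_of_le n (le_iSup_of_le (Finset.self_mem_range_succ n) le_rfl))

lemma meas_Aset_inter (hR : IsCyclicUrn μ m j0 R) (n : ℕ) (j : Fin m) (v : Fin m → ℝ) :
    (μ (Aset m R n j ∩ R n ⁻¹' {v})).toReal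
      = v j / ((n : ℝ) + 1) * (μ (R n ⁻¹' {v})).toReal := by
  haveI := hR.isProb
  set s := R n ⁻¹' {v} with hsdef
  have hle := urnFilt_le hR n
  have hsF : MeasurableSet[urnFilt m R n] s := measurable_filt hR n (measurableSet_singleton v)
  have hs : MeasurableSet s := hle _ hsF
  have hA := measurableSet_Aset hR n j
  have hint : Integrable (Set.indicator (Aset m R n j) (fun _ => (1:ℝ))) μ :=
    (integrable_const 1).indicator hA
  have h1 : ∫ ω in s, Set.indicator (Aset m R n j) (fun _ => (1:ℝ)) ω ∂μ
      = (μ (Aset m R n j ∩ s)).toReal := by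
    rw [setIntegral_indicator hA, setIntegral_const, smul_eq_mul, mul_one, measureReal_def, Set.inter_comm]
  have h2 : ∫ ω in s, Set.indicator (Aset m R n j) (fun _ => (1:ℝ)) ω ∂μ
      = ∫ ω in s, R n ω j / ((n:ℝ)+1) ∂μ := by
    rw [← setIntegral_condExp hle hint hsF]
    refine setIntegral_congr_ae hs ?_
    filter_upwards [step' hR n j] with ω hω _
    exact hω
  have h3 : ∫ ω in s, R n ω j / ((n:ℝ)+1) ∂μ = v j / ((n:ℝ)+1) * (μ s).toReal := by
    rw [setIntegral_congr_fun hs (g := fun _ => v j / ((n:ℝ)+1))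
      (fun ω hω => by rw [show R n ω = v from hω]), setIntegral_const, smul_eq_mul, mul_comm, measureReal_def]
  rw [← h1, h2, h3]

lemma nonnegR (hR : IsCyclicUrn μ m j0 R) (n : ℕ) (ω : Ω) (i : Fin m) : 0 ≤ R n ω i := by
  obtain ⟨z, hz⟩ := hR.natVal n ω i; rw [hz]; positivity

lemma cover (hm : 2 ≤ m) (hR : IsCyclicUrn μ m j0 R) (n : ℕ)
    (hsum : ∀ᵐ ω ∂μ, ∑ i, R n ω i = (n:ℝ)+1) :
    ∀ᵐ ω ∂μ, ∃ j : Fin m, R (n+1) ω = fun i => R n ω i + stv m j i := by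
  haveI := hR.isProb
  have hle := urnFilt_le hR n
  have hAm : ∀ j : Fin m, MeasurableSet (Aset m R n j) := fun j => measurableSet_Aset hR n j
  have hint : ∀ j : Fin m, Integrable (fun ω => R n ω j / ((n:ℝ)+1)) μ := by
    intro j
    refine Integrable.mono' (integrable_const ((n:ℝ)+1))
      (((measurable_pi_apply j).comp (hR.meas n)).div_const _).aestronglyMeasurable ?_
    filter_upwards [hsum] with ω hs
    have h0 : ∀ i, 0 ≤ R n ω i := nonnegR hR n ω
    have hj : R n ω j ≤ (n:ℝ)+1 := by
      rw [← hs]; exact Finset.single_le_sum (fun i _ => h0 i) (Finset.mem_univ j)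
    have hnn : (0:ℝ) ≤ R n ω j / ((n:ℝ)+1) := div_nonneg (h0 j) (by positivity)
    rw [Real.norm_eq_abs, _root_.abs_of_nonneg hnn]
    calc R n ω j / ((n:ℝ)+1) ≤ R n ω j := by
          apply div_le_self (h0 j)
          have : (0:ℝ) ≤ (n:ℝ) := Nat.cast_nonneg n
          linarith
      _ ≤ (n:ℝ)+1 := hj
  have hμA : ∀ j : Fin m, (μ (Aset m R n j)).toReal = ∫ ω, R n ω j / ((n:ℝ)+1) ∂μ := by
    intro j
    have hI : ∫ ω, Set.indicator (Aset m R n j) (fun _ => (1:ℝ)) ω ∂μ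
        = (μ (Aset m R n j)).toReal := by
      rw [integral_indicator (hAm j), setIntegral_const, smul_eq_mul, mul_one, measureReal_def]
    rw [← hI, ← integral_condExp hle (f := Set.indicator (Aset m R n j) fun _ => (1:ℝ))]
    exact integral_congr_ae (step' hR n j)
  have hdisj : Pairwise (Function.onFun Disjoint fun j : Fin m => Aset m R n j) := by
    intro j j' hne
    refine Set.disjoint_left.mpr fun ω hj hj' => hne ?_
    have h := (mem_Aset_iff.mp hj).symm.trans (mem_Aset_iff.mp hj')
    apply stv_inj m hm
    funext i
    have hx := congrFun h i
    linarith
  have hne : (∑ j : Fin m, μ (Aset m R n j)) ≠ ⊤ :=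
    ENNReal.sum_ne_top.mpr fun j _ => measure_ne_top μ _
  have htot : μ (⋃ j, Aset m R n j) = 1 := by
    rw [measure_iUnion hdisj hAm, tsum_fintype]
    have h1 : (∑ j : Fin m, μ (Aset m R n j)).toReal = 1 := by
      rw [ENNReal.toReal_sum (fun j _ => measure_ne_top μ _),
        Finset.sum_congr rfl fun j _ => hμA j,
        ← integral_finset_sum _ (fun j _ => hint j)]
      have h2 : ∫ ω, (∑ j : Fin m, R n ω j / ((n:ℝ)+1)) ∂μ = ∫ ω, (1:ℝ) ∂μ := by
        refine integral_congr_ae ?_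
        filter_upwards [hsum] with ω hs
        rw [← Finset.sum_div, hs, div_self]
        positivity
      rw [h2]; simp
    have h3 := ENNReal.ofReal_toReal hne
    rw [h1] at h3
    rw [← h3, ENNReal.ofReal_one]
  have hcompl : μ ((⋃ j, Aset m R n j)ᶜ) = 0 := by
    rw [measure_compl (MeasurableSet.iUnion hAm) (measure_ne_top μ _), htot, measure_univ,
      tsub_self]
  have hae : ∀ᵐ ω ∂μ, ω ∈ ⋃ j, Aset m R n j := by
    rw [ae_iff]
    exact hcompl
  filter_upwards [hae] with ω hω
  obtain ⟨j, hj⟩ := Set.mem_iUnion.mp hω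
  exact ⟨j, mem_Aset_iff.mp hj⟩

lemma sumR (hm : 2 ≤ m) (hR : IsCyclicUrn μ m j0 R) :
    ∀ n, ∀ᵐ ω ∂μ, ∑ i, R n ω i = (n:ℝ)+1 := by
  intro n
  induction n with
  | zero =>
    refine Filter.Eventually.of_forall fun ω => ?_
    simp [hR.init ω]
  | succ n ih =>
    filter_upwards [ih, cover hm hR n ih] with ω hs hcov
    obtain ⟨j, hj⟩ := hcov
    rw [hj]
    simp only []
    rw [Finset.sum_add_distrib, hs, sum_stv m hm j]
    push_cast
    ring

lemma suppR (hm : 2 ≤ m) (hR : IsCyclicUrn μ m j0 R) (n : ℕ) :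
    ∀ᵐ ω ∂μ, R n ω ∈ Sfin m n := by
  filter_upwards [sumR hm hR n] with ω hs
  exact mem_Sfin_of (fun i => hR.natVal n ω i) hs

lemma exp_eq (hm : 2 ≤ m) (hR : IsCyclicUrn μ m j0 R) (n : ℕ) (φ : (Fin m → ℝ) → ℂ) :
    ∫ ω, φ (R n ω) ∂μ
      = ∑ v ∈ Sfin m n, ((μ (R n ⁻¹' {v})).toReal : ℂ) * φ v := by
  haveI := hR.isProb
  have hpre : ∀ v : Fin m → ℝ, MeasurableSet (R n ⁻¹' {v}) :=
    fun v => (hR.meas n) (measurableSet_singleton v)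
  have hae : ∀ᵐ ω ∂μ, φ (R n ω)
      = ∑ v ∈ Sfin m n, Set.indicator (R n ⁻¹' {v}) (fun _ => φ v) ω := by
    filter_upwards [suppR hm hR n] with ω hmem
    have hz : ∀ v ∈ Sfin m n, v ≠ R n ω →
        (R n ⁻¹' {v}).indicator (fun _ => φ v) ω = 0 := by
      intro v _ hne
      apply Set.indicator_of_notMem
      intro hh
      exact hne (Set.mem_singleton_iff.mp (Set.mem_preimage.mp hh)).symm
    rw [Finset.sum_eq_single_of_mem (R n ω) hmem hz,
      Set.indicator_of_mem (Set.mem_preimage.mpr (Set.mem_singleton _))]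
  rw [integral_congr_ae hae,
    integral_finset_sum _ (fun v _ => (integrable_const (φ v)).indicator (hpre v))]
  refine Finset.sum_congr rfl fun v _ => ?_
  rw [integral_indicator (hpre v), setIntegral_const, Complex.real_smul, measureReal_def]

lemma trans_eq (hm : 2 ≤ m) (hR : IsCyclicUrn μ m j0 R) (n : ℕ) (φ : (Fin m → ℝ) → ℂ) :
    ∫ ω, φ (R (n+1) ω) ∂μ
      = ∑ v ∈ Sfin m n, ((μ (R n ⁻¹' {v})).toReal : ℂ) *
          ∑ j : Fin m, ((v j : ℂ) / ((n:ℂ)+1)) * φ (v + stv m j) := by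
  haveI := hR.isProb
  have hpre : ∀ v : Fin m → ℝ, MeasurableSet (R n ⁻¹' {v}) :=
    fun v => (hR.meas n) (measurableSet_singleton v)
  have hA : ∀ j : Fin m, MeasurableSet (Aset m R n j) := fun j => measurableSet_Aset hR n j
  have hae : ∀ᵐ ω ∂μ, φ (R (n+1) ω)
      = ∑ v ∈ Sfin m n, ∑ j : Fin m,
          Set.indicator (Aset m R n j ∩ R n ⁻¹' {v}) (fun _ => φ (v + stv m j)) ω := by
    filter_upwards [suppR hm hR n, cover hm hR n (sumR hm hR n)] with ω hmem hcov
    obtain ⟨j, hj⟩ := hcov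
    have hz1 : ∀ v ∈ Sfin m n, v ≠ R n ω →
        (∑ j' : Fin m, (Aset m R n j' ∩ R n ⁻¹' {v}).indicator
          (fun _ => φ (v + stv m j')) ω) = 0 := by
      intro v _ hne
      refine Finset.sum_eq_zero fun j' _ => ?_
      apply Set.indicator_of_notMem
      intro hh
      exact hne (Set.mem_singleton_iff.mp (Set.mem_preimage.mp hh.2)).symm
    have hz2 : ∀ j' ∈ (Finset.univ : Finset (Fin m)), j' ≠ j →
        (Aset m R n j' ∩ R n ⁻¹' {R n ω}).indicator (fun _ => φ (R n ω + stv m j')) ω = 0 := by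
      intro j' _ hne
      apply Set.indicator_of_notMem
      intro hh
      apply hne
      apply stv_inj m hm
      funext i
      have hx := congrFun ((mem_Aset_iff.mp hh.1).symm.trans hj) i
      linarith
    have hmem2 : ω ∈ Aset m R n j ∩ R n ⁻¹' {R n ω} :=
      ⟨mem_Aset_iff.mpr hj, Set.mem_preimage.mpr (Set.mem_singleton _)⟩
    rw [Finset.sum_eq_single_of_mem (R n ω) hmem hz1,
      Finset.sum_eq_single j hz2 (fun habs => absurd (Finset.mem_univ j) habs),
      Set.indicator_of_mem hmem2, hj]
    rfl
  rw [integral_congr_ae hae,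
    integral_finset_sum _ (fun v _ => integrable_finset_sum _
      (fun j _ => (integrable_const _).indicator ((hA j).inter (hpre v))))]
  refine Finset.sum_congr rfl fun v _ => ?_
  rw [integral_finset_sum _ (fun j _ => (integrable_const _).indicator ((hA j).inter (hpre v))),
    Finset.mul_sum]
  refine Finset.sum_congr rfl fun j _ => ?_
  rw [integral_indicator ((hA j).inter (hpre v)), setIntegral_const, Complex.real_smul, measureReal_def,
    meas_Aset_inter hR n j v]
  push_cast
  ring

lemma sumv_of_mem {n : ℕ} {v : Fin m → ℝ} (hv : v ∈ Sfin m n) :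
    (∑ j : Fin m, ((v j : ℝ) : ℂ)) = (n:ℂ)+1 := by
  have h := sum_of_mem_Sfin hv
  calc (∑ j : Fin m, ((v j : ℝ) : ℂ)) = ((∑ j, v j : ℝ) : ℂ) := by push_cast; ring
    _ = (((n:ℝ)+1 : ℝ) : ℂ) := by rw [h]
    _ = (n:ℂ)+1 := by push_cast; ring

lemma hn0 (n : ℕ) : ((n:ℂ)+1) ≠ 0 := by
  have h : ((n+1:ℕ):ℂ) ≠ 0 := Nat.cast_ne_zero.mpr (Nat.succ_ne_zero n)
  push_cast at h
  exact h

lemma recU (hm : 2 ≤ m) (hR : IsCyclicUrn μ m j0 R) (a n : ℕ) :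
    ∫ ω, ucoef m a (R (n+1) ω) ∂μ
      = (((n:ℂ)+1+cw m ^ a)/((n:ℂ)+1)) * ∫ ω, ucoef m a (R n ω) ∂μ := by
  have key : ∀ v ∈ Sfin m n,
      (∑ j : Fin m, ((v j:ℂ)/((n:ℂ)+1)) * ucoef m a (v + stv m j))
        = (((n:ℂ)+1+cw m ^ a)/((n:ℂ)+1)) * ucoef m a v := by
    intro v hv
    calc (∑ j : Fin m, ((v j:ℂ)/((n:ℂ)+1)) * ucoef m a (v + stv m j))
        = ∑ j : Fin m, ((v j:ℂ) * ucoef m a v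
            + cw m ^ a * (cw m ^ (a*(j:ℕ)) * (v j:ℂ))) / ((n:ℂ)+1) := by
          refine Finset.sum_congr rfl fun j _ => ?_
          rw [ucoef_add_stv m hm a v j]; ring
      _ = ((∑ j : Fin m, (v j:ℂ)) * ucoef m a v
            + cw m ^ a * ∑ j : Fin m, cw m ^ (a*(j:ℕ)) * (v j:ℂ)) / ((n:ℂ)+1) := by
          rw [← Finset.sum_div, Finset.sum_add_distrib, ← Finset.sum_mul, ← Finset.mul_sum]
      _ = (((n:ℂ)+1) * ucoef m a v + cw m ^ a * ucoef m a v) / ((n:ℂ)+1) := by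
          rw [sumv_of_mem hv,
            show (∑ j : Fin m, cw m ^ (a*(j:ℕ)) * ((v j:ℝ):ℂ)) = ucoef m a v from rfl]
      _ = (((n:ℂ)+1+cw m ^ a)/((n:ℂ)+1)) * ucoef m a v := by
          field_simp
  have hc : ∀ v : Fin m → ℝ, ((μ (R n ⁻¹' {v})).toReal : ℂ) *
        ((((n:ℂ)+1+cw m ^ a)/((n:ℂ)+1)) * ucoef m a v)
      = (((n:ℂ)+1+cw m ^ a)/((n:ℂ)+1)) *
        (((μ (R n ⁻¹' {v})).toReal : ℂ) * ucoef m a v) := fun v => by ring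
  rw [trans_eq hm hR n (ucoef m a),
    Finset.sum_congr rfl fun v hv => by rw [key v hv],
    Finset.sum_congr rfl fun v _ => hc v, ← Finset.mul_sum,
    ← exp_eq hm hR n (ucoef m a)]

lemma recF (hm : 2 ≤ m) (hR : IsCyclicUrn μ m j0 R) (k l n : ℕ) :
    ∫ ω, ucoef m k (R (n+1) ω) * ucoef m l (R (n+1) ω) ∂μ
      = (((n:ℂ)+1+cw m ^ k+cw m ^ l)/((n:ℂ)+1)) *
          ∫ ω, ucoef m k (R n ω) * ucoef m l (R n ω) ∂μ
        + (cw m ^ (k+l)/((n:ℂ)+1)) * ∫ ω, ucoef m (k+l) (R n ω) ∂μ := by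
  have key : ∀ v ∈ Sfin m n,
      (∑ j : Fin m, ((v j:ℂ)/((n:ℂ)+1)) * (ucoef m k (v + stv m j) * ucoef m l (v + stv m j)))
        = (((n:ℂ)+1+cw m ^ k+cw m ^ l)/((n:ℂ)+1)) * (ucoef m k v * ucoef m l v)
          + (cw m ^ (k+l)/((n:ℂ)+1)) * ucoef m (k+l) v := by
    intro v hv
    have e1 : ∑ j : Fin m, (v j:ℂ) * (ucoef m k v * ucoef m l v)
        = ((n:ℂ)+1) * (ucoef m k v * ucoef m l v) := by
      rw [← Finset.sum_mul, sumv_of_mem hv]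
    have e2 : ∑ j : Fin m, cw m ^ k * ((cw m ^ (k*(j:ℕ)) * (v j:ℂ)) * ucoef m l v)
        = cw m ^ k * (ucoef m k v * ucoef m l v) := by
      rw [← Finset.mul_sum, ← Finset.sum_mul]; rfl
    have e3 : ∑ j : Fin m, cw m ^ l * ((cw m ^ (l*(j:ℕ)) * (v j:ℂ)) * ucoef m k v)
        = cw m ^ l * (ucoef m l v * ucoef m k v) := by
      rw [← Finset.mul_sum, ← Finset.sum_mul]; rfl
    have e4 : ∑ j : Fin m, (cw m ^ k * cw m ^ l) * (cw m ^ ((k+l)*(j:ℕ)) * (v j:ℂ))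
        = cw m ^ (k+l) * ucoef m (k+l) v := by
      rw [← Finset.mul_sum, ← pow_add]; rfl
    calc (∑ j : Fin m, ((v j:ℂ)/((n:ℂ)+1)) *
            (ucoef m k (v + stv m j) * ucoef m l (v + stv m j)))
        = ∑ j : Fin m, ((v j:ℂ) * (ucoef m k v * ucoef m l v)
            + cw m ^ k * ((cw m ^ (k*(j:ℕ)) * (v j:ℂ)) * ucoef m l v)
            + cw m ^ l * ((cw m ^ (l*(j:ℕ)) * (v j:ℂ)) * ucoef m k v)
            + (cw m ^ k * cw m ^ l) * (cw m ^ ((k+l)*(j:ℕ)) * (v j:ℂ))) / ((n:ℂ)+1) := by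
          refine Finset.sum_congr rfl fun j _ => ?_
          rw [ucoef_add_stv m hm k v j, ucoef_add_stv m hm l v j,
            show cw m ^ ((k+l)*(j:ℕ)) = cw m ^ (k*(j:ℕ)) * cw m ^ (l*(j:ℕ)) from by
              rw [← pow_add, ← add_mul]]
          ring
      _ = ((∑ j : Fin m, (v j:ℂ) * (ucoef m k v * ucoef m l v))
            + (∑ j : Fin m, cw m ^ k * ((cw m ^ (k*(j:ℕ)) * (v j:ℂ)) * ucoef m l v))
            + (∑ j : Fin m, cw m ^ l * ((cw m ^ (l*(j:ℕ)) * (v j:ℂ)) * ucoef m k v))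
            + (∑ j : Fin m, (cw m ^ k * cw m ^ l) * (cw m ^ ((k+l)*(j:ℕ)) * (v j:ℂ))))
            / ((n:ℂ)+1) := by
          rw [← Finset.sum_div, Finset.sum_add_distrib, Finset.sum_add_distrib,
            Finset.sum_add_distrib]
      _ = (((n:ℂ)+1) * (ucoef m k v * ucoef m l v)
            + cw m ^ k * (ucoef m k v * ucoef m l v)
            + cw m ^ l * (ucoef m l v * ucoef m k v)
            + cw m ^ (k+l) * ucoef m (k+l) v) / ((n:ℂ)+1) := by
          rw [e1, e2, e3, e4]
      _ = _ := by
          have := hn0 n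
          field_simp
  rw [trans_eq hm hR n (fun w => ucoef m k w * ucoef m l w),
    Finset.sum_congr rfl fun v hv => by rw [key v hv]]
  have split : ∀ v : Fin m → ℝ, ((μ (R n ⁻¹' {v})).toReal : ℂ) *
        ((((n:ℂ)+1+cw m ^ k+cw m ^ l)/((n:ℂ)+1)) * (ucoef m k v * ucoef m l v)
          + (cw m ^ (k+l)/((n:ℂ)+1)) * ucoef m (k+l) v)
      = (((n:ℂ)+1+cw m ^ k+cw m ^ l)/((n:ℂ)+1)) *
          (((μ (R n ⁻¹' {v})).toReal : ℂ) * (ucoef m k v * ucoef m l v))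
        + (cw m ^ (k+l)/((n:ℂ)+1)) *
          (((μ (R n ⁻¹' {v})).toReal : ℂ) * ucoef m (k+l) v) := fun v => by ring
  rw [Finset.sum_congr rfl fun v _ => split v, Finset.sum_add_distrib,
    ← Finset.mul_sum, ← Finset.mul_sum,
    ← exp_eq hm hR n (fun w => ucoef m k w * ucoef m l w), ← exp_eq hm hR n (ucoef m (k+l))]

lemma ucoef_R0 (hm : 2 ≤ m) (hR : IsCyclicUrn μ m ⟨0, by linarith⟩ R) (a : ℕ) (ω : Ω) :
    ucoef m a (R 0 ω) = 1 := by
  rw [hR.init ω, ucoef]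
  have h : ∀ t : Fin m, cw m ^ (a * (t:ℕ)) *
      (((if t = (⟨0, by omega⟩ : Fin m) then (1:ℝ) else 0) : ℝ) : ℂ)
      = if t = (⟨0, by omega⟩ : Fin m) then cw m ^ (a * (t:ℕ)) else 0 := by
    intro t
    by_cases ht : t = (⟨0, by omega⟩ : Fin m) <;> simp [ht]
  rw [Finset.sum_congr rfl fun t _ => h t, Finset.sum_ite_eq' Finset.univ _ _,
    if_pos (Finset.mem_univ _)]
  simp

end UrnLemmas

set_option maxHeartbeats 1000000 in
theorem stmt11 {Ω : Type*} [MeasurableSpace Ω] (μ : Measure Ω) (m : ℕ) (hm : 2 ≤ m)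
    (R : ℕ → Ω → Fin m → ℝ) (hR : IsCyclicUrn μ m ⟨0, by omega⟩ R)
    (k l : ℕ) (hk : k < m) (hl : l < m)
    (h0 : cw m ^ k + cw m ^ l ≠ 0) (h1 : cw m ^ k + cw m ^ l ≠ -1)
    (h2 : cw m ^ k + cw m ^ l ≠ -2) (h3 : cw m ^ (k + l) ≠ -1)
    (h4 : cw m ^ (k + l) ≠ cw m ^ k + cw m ^ l) (n : ℕ) :
    ∫ ω, ucoef m k (R n ω) * ucoef m l (R n ω) ∂μ =
      (cw m ^ (k + l) - cw m ^ k - cw m ^ l)⁻¹ *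
        (Complex.Gamma ((n : ℂ) + 1 + cw m ^ (k + l)) /
            (Complex.Gamma ((n : ℂ) + 1) * Complex.Gamma (cw m ^ (k + l))) -
          Complex.Gamma ((n : ℂ) + 1 + cw m ^ k + cw m ^ l) /
            (Complex.Gamma ((n : ℂ) + 1) * Complex.Gamma (cw m ^ k + cw m ^ l))) := by
  haveI := hR.isProb
  have hp0 : cw m ^ (k+l) ≠ 0 := by
    intro h
    have hb := cw_abs m hm (k+l)
    rw [h] at hb; simp at hb
  have hpne : ∀ j : ℕ, cw m ^ (k+l) ≠ -(j:ℂ) := by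
    intro j h
    rcases j with _|_|j
    · exact hp0 (by rw [h]; norm_num)
    · exact h3 (by rw [h]; norm_num)
    · have hb := cw_abs m hm (k+l)
      rw [h] at hb
      simp only [norm_neg, Complex.norm_natCast] at hb
      have : (j:ℝ) + 2 = 1 := by push_cast at hb; linarith
      have hj : (0:ℝ) ≤ (j:ℝ) := Nat.cast_nonneg j
      linarith
  have hsne : ∀ j : ℕ, cw m ^ k + cw m ^ l ≠ -(j:ℂ) := by
    intro j h
    have hb : ‖cw m ^ k + cw m ^ l‖ ≤ 2 := by
      calc ‖cw m ^ k + cw m ^ l‖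
          ≤ ‖cw m ^ k‖ + ‖cw m ^ l‖ := norm_add_le _ _
        _ = 2 := by rw [cw_abs m hm k, cw_abs m hm l]; norm_num
    rcases j with _|_|_|j
    · exact h0 (by rw [h]; norm_num)
    · exact h1 (by rw [h]; norm_num)
    · exact h2 (by rw [h]; norm_num)
    · rw [h] at hb
      simp only [norm_neg, Complex.norm_natCast] at hb
      have : ((j:ℝ) + 3) ≤ 2 := by push_cast at hb; linarith
      have hj : (0:ℝ) ≤ (j:ℝ) := Nat.cast_nonneg j
      linarith
  have hGp : Complex.Gamma (cw m ^ (k+l)) ≠ 0 := Complex.Gamma_ne_zero hpne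
  have hGs : Complex.Gamma (cw m ^ k + cw m ^ l) ≠ 0 := Complex.Gamma_ne_zero hsne
  have hGn : ∀ N : ℕ, Complex.Gamma ((N:ℂ)+1) ≠ 0 := fun N =>
    Complex.Gamma_ne_zero_of_re_pos
      (by simp only [Complex.add_re, Complex.natCast_re, Complex.one_re]; positivity)
  have hps : cw m ^ (k+l) - (cw m ^ k + cw m ^ l) ≠ 0 := sub_ne_zero.mpr h4
  have hGrec : ∀ (z : ℂ), (∀ j : ℕ, z ≠ -(j:ℂ)) → ∀ N : ℕ,
      Complex.Gamma (((N+1:ℕ):ℂ)+1+z) / (Complex.Gamma (((N+1:ℕ):ℂ)+1) * Complex.Gamma z)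
      = (((N:ℂ)+1+z)/((N:ℂ)+1)) *
        (Complex.Gamma ((N:ℂ)+1+z) / (Complex.Gamma ((N:ℂ)+1) * Complex.Gamma z)) := by
    intro z hz N
    have ha : ((N+1:ℕ):ℂ)+1+z = ((N:ℂ)+1+z)+1 := by push_cast; ring
    have hb : ((N+1:ℕ):ℂ)+1 = ((N:ℂ)+1)+1 := by push_cast; ring
    have hnz : (N:ℂ)+1+z ≠ 0 := by
      intro hh
      apply hz (N+1)
      push_cast
      linear_combination hh
    rw [ha, hb, Complex.Gamma_add_one _ hnz, Complex.Gamma_add_one _ (hn0 N)]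
    have h5 := hn0 N
    have h6 := hGn N
    field_simp
  have hU : ∀ N : ℕ, (∫ ω, ucoef m (k+l) (R N ω) ∂μ)
      = Complex.Gamma ((N:ℂ)+1+cw m ^ (k+l)) /
          (Complex.Gamma ((N:ℂ)+1) * Complex.Gamma (cw m ^ (k+l))) / cw m ^ (k+l) := by
    intro N
    induction N with
    | zero =>
      have hconst : ∫ ω, ucoef m (k+l) (R 0 ω) ∂μ = 1 := by
        rw [integral_congr_ae (Filter.Eventually.of_forall fun ω => ucoef_R0 hm hR (k+l) ω)]
        simp
      rw [hconst,
        show ((0:ℕ):ℂ)+1+cw m ^ (k+l) = cw m ^ (k+l) + 1 from by push_cast; ring,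
        Complex.Gamma_add_one _ hp0,
        show ((0:ℕ):ℂ)+1 = 1 from by push_cast; ring, Complex.Gamma_one]
      field_simp
    | succ N ih =>
      rw [recU hm hR (k+l) N, ih, hGrec _ hpne N]
      ring
  have hF : ∀ N : ℕ, (∫ ω, ucoef m k (R N ω) * ucoef m l (R N ω) ∂μ)
      = (cw m ^ (k+l) - (cw m ^ k + cw m ^ l))⁻¹ *
        (Complex.Gamma ((N:ℂ)+1+cw m ^ (k+l)) /
            (Complex.Gamma ((N:ℂ)+1) * Complex.Gamma (cw m ^ (k+l)))
          - Complex.Gamma ((N:ℂ)+1+(cw m ^ k + cw m ^ l)) /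
            (Complex.Gamma ((N:ℂ)+1) * Complex.Gamma (cw m ^ k + cw m ^ l))) := by
    intro N
    induction N with
    | zero =>
      have hconst : ∫ ω, ucoef m k (R 0 ω) * ucoef m l (R 0 ω) ∂μ = 1 := by
        rw [integral_congr_ae (Filter.Eventually.of_forall fun ω => by
          rw [ucoef_R0 hm hR k ω, ucoef_R0 hm hR l ω, one_mul])]
        simp
      rw [hconst,
        show ((0:ℕ):ℂ)+1+cw m ^ (k+l) = cw m ^ (k+l) + 1 from by push_cast; ring,
        show ((0:ℕ):ℂ)+1+(cw m ^ k + cw m ^ l) = (cw m ^ k + cw m ^ l) + 1 from by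
          push_cast; ring,
        Complex.Gamma_add_one _ hp0, Complex.Gamma_add_one _ h0,
        show ((0:ℕ):ℂ)+1 = 1 from by push_cast; ring, Complex.Gamma_one]
      field_simp
    | succ N ih =>
      rw [recF hm hR k l N, ih, hU N, hGrec _ hpne N, hGrec _ hsne N]
      have h5 := hn0 N
      generalize (Complex.Gamma ((N:ℂ)+1+cw m ^ (k+l)) /
          (Complex.Gamma ((N:ℂ)+1) * Complex.Gamma (cw m ^ (k+l)))) = Gp
      generalize (Complex.Gamma ((N:ℂ)+1+(cw m ^ k + cw m ^ l)) /
          (Complex.Gamma ((N:ℂ)+1) * Complex.Gamma (cw m ^ k + cw m ^ l))) = Gs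
      field_simp
      ring
  rw [hF n,
    show (n:ℂ)+1+cw m ^ k+cw m ^ l = (n:ℂ)+1+(cw m ^ k + cw m ^ l) from by ring,
    show cw m ^ (k+l) - cw m ^ k - cw m ^ l = cw m ^ (k+l) - (cw m ^ k + cw m ^ l) from by ring]

end
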